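/- Let ε > 0 and define g(p) = p/(p + (1-p)·e^{ε}) − p for p ∈ [0,1]. Then g attains its minimum on [0,1] at p = 1/(1 + e^{−ε/2}), and the minimum value equals −(e^{ε/2} − 1)/(e^{ε/2} + 1). -/

import Mathlib

open Real

theorem stmt_1 (ε : ℝ) (hε : 0 < ε) :
    (∀ p ∈ Set.Icc (0 : ℝ) 1,
      (1 / (1 + exp (-ε / 2))) / (1 / (1 + exp (-ε / 2)) +
          (1 - 1 / (1 + exp (-ε / 2))) * exp ε) - 1 / (1 + exp (-ε / 2)) ≤
        p / (p + (1 - p) * exp ε) - p) ∧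
    (1 / (1 + exp (-ε / 2))) / (1 / (1 + exp (-ε / 2)) +
        (1 - 1 / (1 + exp (-ε / 2))) * exp ε) - 1 / (1 + exp (-ε / 2)) =
      -((exp (ε / 2) - 1) / (exp (ε / 2) + 1)) := by
  set s := exp (ε / 2) with hs
  have hs1 : 1 < s := by
    nlinarith [Real.add_one_le_exp (ε/2)]
  have hs0 : 0 < s := by linarith
  have hE : exp ε = s * s := by
    rw [hs, ← Real.exp_add]; ring_nf
  have hexp : exp (-ε / 2) = 1 / s := by
    rw [show -ε/2 = -(ε/2) by ring, Real.exp_neg, one_div, hs]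
  have hd1 : (0:ℝ) < 1 + 1 / s := by positivity
  have hkey : (1 / (1 + exp (-ε / 2))) = s / (s + 1) := by
    rw [hexp]; field_simp
  have hval : (1 / (1 + exp (-ε / 2))) / (1 / (1 + exp (-ε / 2)) +
        (1 - 1 / (1 + exp (-ε / 2))) * exp ε) - 1 / (1 + exp (-ε / 2)) =
      -((s - 1) / (s + 1)) := by
    rw [hkey, hE]
    have h1 : s / (s + 1) + (1 - s / (s + 1)) * (s * s) = s := by
      field_simp; ring
    rw [h1]
    field_simp
    ring
  constructor
  · intro p hp
    obtain ⟨hp0, hp1⟩ := hp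
    rw [hval, hE]
    have hD : (0:ℝ) < p + (1 - p) * (s * s) := by nlinarith [mul_nonneg (by linarith : (0:ℝ) ≤ 1 - p) (by nlinarith : (0:ℝ) ≤ s * s - 1)]
    rw [div_sub' hD.ne', ← neg_div, div_le_div_iff₀ (by linarith) hD]
    nlinarith [mul_nonneg (sq_nonneg ((s + 1) * p - s)) (le_of_lt (by linarith : (0:ℝ) < s - 1))]
  · rw [hval]
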